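/- Suppose f ≥ −1 a.e. on a probability space and T is measure-preserving. Then for every n ≥ 0 and every r ≥ 1, ‖∑_{i=0}^{n} f∘T^i‖_r^r ≥ (n+1) ∫_{f>n} (f−n)^r dμ. -/

import Mathlib

open MeasureTheory Filter Topology Set

private lemma sum_rpow_le_rpow_sum {ι : Type*} (s : Finset ι) (g : ι → ENNReal)
    {r : ℝ} (hr : 1 ≤ r) : ∑ i ∈ s, g i ^ r ≤ (∑ i ∈ s, g i) ^ r := by
  induction s using Finset.cons_induction with
  | empty => simp [ENNReal.zero_rpow_of_pos (lt_of_lt_of_le one_pos hr)]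
  | cons a s ha ih =>
    rw [Finset.sum_cons, Finset.sum_cons]
    calc g a ^ r + ∑ i ∈ s, g i ^ r ≤ g a ^ r + (∑ i ∈ s, g i) ^ r := by gcongr
    _ ≤ (g a + ∑ i ∈ s, g i) ^ r := ENNReal.add_rpow_le_rpow_add _ _ hr

private lemma stepA (n : ℕ) (a : ℕ → ℝ) (h : ∀ i ∈ Finset.range (n + 1), -1 ≤ a i) :
    ∑ i ∈ Finset.range (n + 1), max (a i - n) 0 ≤ |∑ i ∈ Finset.range (n + 1), a i| := by
  by_cases hex : ∃ j ∈ Finset.range (n + 1), (n : ℝ) < a j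
  · obtain ⟨j, hj, hja⟩ := hex
    set c : ℕ → ℝ := fun i => if (n : ℝ) < a i then (n : ℝ) else -1 with hc
    have hcsum : (0 : ℝ) ≤ ∑ i ∈ Finset.range (n + 1), c i := by
      have h1 : ((n : ℝ) + 1) ≤ ∑ i ∈ Finset.range (n + 1), (c i + 1) := by
        have hterm : c j + 1 = (n : ℝ) + 1 := by simp [hc, hja]
        have hsle : c j + 1 ≤ ∑ x ∈ Finset.range (n + 1), (c x + 1) :=
          Finset.single_le_sum (f := fun i => c i + 1)
            (fun i _ => by by_cases hi : (n : ℝ) < a i <;> simp [hc, hi] <;> positivity) hj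
        linarith
      have h2 : ∑ i ∈ Finset.range (n + 1), (c i + 1)
          = (∑ i ∈ Finset.range (n + 1), c i) + ((n : ℝ) + 1) := by
        rw [Finset.sum_add_distrib]
        simp [Finset.card_range]
      linarith
    have hpt : ∀ i ∈ Finset.range (n + 1), max (a i - n) 0 + c i ≤ a i := by
      intro i hi
      by_cases hcase : (n : ℝ) < a i
      · have : max (a i - n) 0 = a i - n := max_eq_left (by linarith)
        simp [hc, hcase, this]
      · have h0 : max (a i - n) 0 = 0 := max_eq_right (by push_neg at hcase; linarith)
        have := h i hi
        simp [hc, hcase, h0]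
        linarith
    have hsum := Finset.sum_le_sum hpt
    rw [Finset.sum_add_distrib] at hsum
    have : ∑ i ∈ Finset.range (n + 1), max (a i - n) 0 ≤ ∑ i ∈ Finset.range (n + 1), a i := by
      linarith
    exact this.trans (le_abs_self _)
  · push_neg at hex
    have hz : ∑ i ∈ Finset.range (n + 1), max (a i - n) 0 = 0 :=
      Finset.sum_eq_zero fun i hi => max_eq_right (by linarith [hex i hi])
    rw [hz]
    exact abs_nonneg _

theorem stmt17 {X : Type*} [MeasurableSpace X] (μ : Measure X) [IsProbabilityMeasure μ]
    (T : X → X) (hT : MeasurePreserving T μ μ)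
    (f : X → ℝ) (hfm : Measurable f) (hfbd : ∀ᵐ x ∂μ, -1 ≤ f x)
    (r : ℝ) (hr : 1 ≤ r) :
    ∀ n : ℕ,
      ((n : ENNReal) + 1) *
          ∫⁻ x in {x | (n : ℝ) < f x}, ENNReal.ofReal ((f x - n) ^ r) ∂μ ≤
        (eLpNorm (fun x => ∑ i ∈ Finset.range (n + 1), f (T^[i] x))
          (ENNReal.ofReal r) μ) ^ r := by
  intro n
  have hr0 : 0 < r := lt_of_lt_of_le one_pos hr
  set S : X → ℝ := fun x => ∑ i ∈ Finset.range (n + 1), f (T^[i] x) with hS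
  set g : X → ENNReal := fun x => ENNReal.ofReal (max (f x - n) 0 ^ r) with hg
  have hgm : Measurable g :=
    ENNReal.measurable_ofReal.comp (((hfm.sub measurable_const).max measurable_const).pow measurable_const)
  have hSm : Measurable S :=
    Finset.measurable_sum _ fun i _ => hfm.comp (hT.iterate i).measurable
  -- RHS = lintegral of nnnorm^r
  have hRHS : (eLpNorm S (ENNReal.ofReal r) μ) ^ r = ∫⁻ x, (‖S x‖₊ : ENNReal) ^ r ∂μ := by
    rw [eLpNorm_eq_lintegral_rpow_enorm_toReal (ENNReal.ofReal_pos.mpr hr0).ne' ENNReal.ofReal_ne_top,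
      ENNReal.toReal_ofReal hr0.le, ← ENNReal.rpow_mul, one_div_mul_cancel hr0.ne',
      ENNReal.rpow_one]
    simp only [enorm_eq_nnnorm]
  -- lintegral of g equals the set lintegral
  have hgset : ∫⁻ x, g x ∂μ = ∫⁻ x in {x | (n : ℝ) < f x}, ENNReal.ofReal ((f x - n) ^ r) ∂μ := by
    have hs : MeasurableSet {x | (n : ℝ) < f x} := measurableSet_lt measurable_const hfm
    rw [← lintegral_add_compl g hs]
    have e1 : ∫⁻ x in {x | (n : ℝ) < f x}, g x ∂μ
        = ∫⁻ x in {x | (n : ℝ) < f x}, ENNReal.ofReal ((f x - n) ^ r) ∂μ := by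
      refine setLIntegral_congr_fun hs (fun x hx => ?_)
      have hx' : (n : ℝ) < f x := hx
      rw [hg]
      simp only
      rw [max_eq_left (by linarith)]
    have e2 : ∫⁻ x in {x | (n : ℝ) < f x}ᶜ, g x ∂μ = 0 := by
      rw [← lintegral_zero (μ := μ.restrict {x | (n : ℝ) < f x}ᶜ)]
      refine setLIntegral_congr_fun hs.compl (fun x hx => ?_)
      have hx' : ¬ (n : ℝ) < f x := hx
      rw [hg]
      simp only
      rw [max_eq_right (by push_neg at hx'; linarith), Real.zero_rpow hr0.ne',
        ENNReal.ofReal_zero]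
    rw [e1, e2, add_zero]
  -- measure preservation
  have hcomp : ∀ i : ℕ, ∫⁻ x, g (T^[i] x) ∂μ = ∫⁻ x, g x ∂μ :=
    fun i => (hT.iterate i).lintegral_comp hgm
  -- a.e. bound
  have hae : ∀ᵐ x ∂μ, ∀ i : ℕ, -1 ≤ f (T^[i] x) := by
    rw [ae_all_iff]
    intro i
    have hmp := hT.iterate i
    have hmap : ∀ᵐ x ∂(Measure.map (T^[i]) μ), -1 ≤ f x := hmp.map_eq.symm ▸ hfbd
    exact (ae_map_iff hmp.measurable.aemeasurable
      (measurableSet_le measurable_const hfm)).1 hmap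
  have hptwise : ∀ᵐ x ∂μ, ∑ i ∈ Finset.range (n + 1), g (T^[i] x) ≤ (‖S x‖₊ : ENNReal) ^ r := by
    filter_upwards [hae] with x hx
    have hb : ∀ i, (0 : ℝ) ≤ max (f (T^[i] x) - n) 0 := fun i => le_max_right _ _
    calc ∑ i ∈ Finset.range (n + 1), g (T^[i] x)
        = ∑ i ∈ Finset.range (n + 1), (ENNReal.ofReal (max (f (T^[i] x) - n) 0)) ^ r := by
          refine Finset.sum_congr rfl fun i _ => ?_
          exact (ENNReal.ofReal_rpow_of_nonneg (hb i) hr0.le).symm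
      _ ≤ (∑ i ∈ Finset.range (n + 1), ENNReal.ofReal (max (f (T^[i] x) - n) 0)) ^ r :=
          sum_rpow_le_rpow_sum _ _ hr
      _ = (ENNReal.ofReal (∑ i ∈ Finset.range (n + 1), max (f (T^[i] x) - n) 0)) ^ r := by
          rw [ENNReal.ofReal_sum_of_nonneg fun i _ => hb i]
      _ ≤ (ENNReal.ofReal |S x|) ^ r :=
          ENNReal.rpow_le_rpow
            (ENNReal.ofReal_le_ofReal (stepA n (fun i => f (T^[i] x)) fun i _ => hx i)) hr0.le
      _ = (‖S x‖₊ : ENNReal) ^ r := by rw [← Real.enorm_eq_ofReal_abs, enorm_eq_nnnorm]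
  calc ((n : ENNReal) + 1) *
        ∫⁻ x in {x | (n : ℝ) < f x}, ENNReal.ofReal ((f x - n) ^ r) ∂μ
      = ∑ i ∈ Finset.range (n + 1), ∫⁻ x, g (T^[i] x) ∂μ := by
        rw [Finset.sum_congr rfl fun i _ => (hcomp i).trans hgset, Finset.sum_const,
          Finset.card_range, nsmul_eq_mul]
        congr 1
        push_cast
        ring
    _ = ∫⁻ x, ∑ i ∈ Finset.range (n + 1), g (T^[i] x) ∂μ :=
        (lintegral_finset_sum _ fun i _ => hgm.comp (hT.iterate i).measurable).symm
    _ ≤ ∫⁻ x, (‖S x‖₊ : ENNReal) ^ r ∂μ := lintegral_mono_ae hptwise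
    _ = (eLpNorm S (ENNReal.ofReal r) μ) ^ r := hRHS.symm
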